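/- Let H be a complex Hilbert space, V ⊆ H a linear subspace, and D_1, …, D_k : V → V linear maps, each admitting a formal adjoint D_i† : V → V. Let φ : V → ℂ be a linear functional such that |φ(v)| ≤ Σ_{i=1}^k ‖D_i v‖ for all v ∈ V. Then there exists u ∈ H with ‖u‖ ≤ 1 such that φ(v) = ⟪√k · (v + Σ_{i=1}^k D_i†(D_i v)), u⟫ for all v ∈ V. -/

import Mathlib

open scoped BigOperators

/-- Let `H` be a complex Hilbert space, `V ⊆ H` a linear subspace, and
`D₁, …, D_k : V → V` linear maps, each admitting a formal adjoint `Dᵢ† : V → V`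
(i.e. `⟪Dᵢ v, w⟫ = ⟪v, Dᵢ† w⟫` for all `v, w ∈ V`).  If `φ : V → ℂ` is linear with
`|φ(v)| ≤ Σᵢ ‖Dᵢ v‖`, then there exists `u ∈ H` with `‖u‖ ≤ 1` such that
`φ(v) = ⟪√k · (v + Σᵢ Dᵢ†(Dᵢ v)), u⟫` for all `v ∈ V`.
(The inner product is linear in the displayed first slot; in Mathlib's convention,
conjugate-linear in the first argument, this is `inner u (√k • (v + Σᵢ Dᵢ†(Dᵢ v)))`.) -/
theorem stmt_0 {H : Type*} [NormedAddCommGroup H] [InnerProductSpace ℂ H]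
    [CompleteSpace H] (V : Submodule ℂ H) (k : ℕ)
    (D Dadj : Fin k → (V →ₗ[ℂ] V))
    (hadj : ∀ (i : Fin k) (v w : V),
      (inner ℂ (((D i) v : H)) ((w : H)) : ℂ) = inner ℂ ((v : H)) (((Dadj i) w : H)))
    (φ : V →ₗ[ℂ] ℂ)
    (hφ : ∀ v : V, ‖φ v‖ ≤ ∑ i : Fin k, ‖((D i) v : H)‖) :
    ∃ u : H, ‖u‖ ≤ 1 ∧ ∀ v : V,
      φ v = inner ℂ u
        ((Real.sqrt k : ℂ) • ((v : H) + ∑ i : Fin k, ((Dadj i) ((D i) v) : H))) := by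
  classical
  set T : V →ₗ[ℂ] V := LinearMap.id + ∑ i : Fin k, (Dadj i).comp (D i) with hT
  have hTv : ∀ v : V, ((T v : V) : H)
      = (v : H) + ∑ i : Fin k, (((Dadj i) ((D i) v) : V) : H) := by
    intro v
    simp [hT, LinearMap.sum_apply]
  set S : V →ₗ[ℂ] H := (Real.sqrt k : ℂ) • (V.subtype.comp T) with hS
  have hSv : ∀ v : V, S v
      = (Real.sqrt k : ℂ) • ((v : H) + ∑ i : Fin k, (((Dadj i) ((D i) v) : V) : H)) := by
    intro v
    simp [hS, hTv v]
  -- the key inner-product identity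
  have hinner : ∀ v : V, RCLike.re (inner ℂ ((v : H)) ((T v : V) : H) : ℂ)
      = ‖(v : H)‖ ^ 2 + ∑ i : Fin k, ‖((D i) v : H)‖ ^ 2 := by
    intro v
    have h : (inner ℂ ((v : H)) ((T v : V) : H) : ℂ)
        = inner ℂ ((v : H)) ((v : H))
          + ∑ i : Fin k, (inner ℂ (((D i) v : H)) (((D i) v : H)) : ℂ) := by
      rw [hTv v, inner_add_right, inner_sum]
      congr 1
      refine Finset.sum_congr rfl fun i _ => ?_
      exact (hadj i v ((D i) v)).symm
    rw [h, map_add, map_sum]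
    rw [inner_self_eq_norm_sq ((v : H))]
    congr 1
    exact Finset.sum_congr rfl fun i _ => inner_self_eq_norm_sq _
  have hvle : ∀ v : V, ‖(v : H)‖ ≤ ‖((T v : V) : H)‖ := by
    intro v
    have h1 : ‖(v : H)‖ ^ 2 ≤ RCLike.re (inner ℂ ((v : H)) ((T v : V) : H) : ℂ) := by
      rw [hinner v]
      have : (0:ℝ) ≤ ∑ i : Fin k, ‖((D i) v : H)‖ ^ 2 :=
        Finset.sum_nonneg fun i _ => sq_nonneg _
      linarith
    have h2 : RCLike.re (inner ℂ ((v : H)) ((T v : V) : H) : ℂ)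
        ≤ ‖(v : H)‖ * ‖((T v : V) : H)‖ := re_inner_le_norm _ _
    nlinarith [norm_nonneg ((v : H)), norm_nonneg (((T v : V) : H))]
  have hsum : ∀ v : V, ∑ i : Fin k, ‖((D i) v : H)‖ ^ 2 ≤ ‖((T v : V) : H)‖ ^ 2 := by
    intro v
    have h1 : ‖(v : H)‖ ^ 2 + ∑ i : Fin k, ‖((D i) v : H)‖ ^ 2
        ≤ ‖(v : H)‖ * ‖((T v : V) : H)‖ := by
      rw [← hinner v]; exact re_inner_le_norm _ _
    have h2 := hvle v
    nlinarith [norm_nonneg ((v : H)), norm_nonneg (((T v : V) : H)), sq_nonneg (‖(v:H)‖)]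
  -- the key norm bound
  have hkey : ∀ v : V, ‖φ v‖ ≤ ‖S v‖ := by
    intro v
    have hnormS : ‖S v‖ = Real.sqrt k * ‖((T v : V) : H)‖ := by
      rw [hS]
      simp only [LinearMap.smul_apply, LinearMap.coe_comp, Function.comp_apply,
        Submodule.coe_subtype, norm_smul]
      congr 1
      rw [Complex.norm_real]
      exact abs_of_nonneg (Real.sqrt_nonneg _)
    have hcs : (∑ i : Fin k, ‖((D i) v : H)‖) ^ 2
        ≤ (k : ℝ) * ∑ i : Fin k, ‖((D i) v : H)‖ ^ 2 := by
      simpa using sq_sum_le_card_mul_sum_sq (s := Finset.univ)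
        (f := fun i : Fin k => ‖((D i) v : H)‖)
    have hsq : (∑ i : Fin k, ‖((D i) v : H)‖) ^ 2
        ≤ (Real.sqrt k * ‖((T v : V) : H)‖) ^ 2 := by
      have : (Real.sqrt k * ‖((T v : V) : H)‖) ^ 2
          = (k : ℝ) * ‖((T v : V) : H)‖ ^ 2 := by
        rw [mul_pow, Real.sq_sqrt (by positivity)]
      rw [this]
      calc (∑ i : Fin k, ‖((D i) v : H)‖) ^ 2
          ≤ (k : ℝ) * ∑ i : Fin k, ‖((D i) v : H)‖ ^ 2 := hcs
        _ ≤ (k : ℝ) * ‖((T v : V) : H)‖ ^ 2 := by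
            exact mul_le_mul_of_nonneg_left (hsum v) (by positivity)
    have hsumle : (∑ i : Fin k, ‖((D i) v : H)‖) ≤ Real.sqrt k * ‖((T v : V) : H)‖ := by
      have h0 : (0:ℝ) ≤ ∑ i : Fin k, ‖((D i) v : H)‖ :=
        Finset.sum_nonneg fun i _ => norm_nonneg _
      have h1 : (0:ℝ) ≤ Real.sqrt k * ‖((T v : V) : H)‖ := by positivity
      calc (∑ i : Fin k, ‖((D i) v : H)‖)
          = Real.sqrt ((∑ i : Fin k, ‖((D i) v : H)‖) ^ 2) := (Real.sqrt_sq h0).symm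
        _ ≤ Real.sqrt ((Real.sqrt k * ‖((T v : V) : H)‖) ^ 2) := Real.sqrt_le_sqrt hsq
        _ = Real.sqrt k * ‖((T v : V) : H)‖ := Real.sqrt_sq h1
    calc ‖φ v‖ ≤ ∑ i : Fin k, ‖((D i) v : H)‖ := hφ v
      _ ≤ Real.sqrt k * ‖((T v : V) : H)‖ := hsumle
      _ = ‖S v‖ := hnormS.symm
  -- factor φ through the range of S
  have hker : LinearMap.ker S ≤ LinearMap.ker φ := by
    intro v hv
    rw [LinearMap.mem_ker] at hv ⊢
    have := hkey v
    rw [hv, norm_zero] at this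
    exact norm_le_zero_iff.mp this
  let φbar : (V ⧸ LinearMap.ker S) →ₗ[ℂ] ℂ := (LinearMap.ker S).liftQ φ hker
  let e := S.quotKerEquivRange
  let ψ₀ : (LinearMap.range S) →ₗ[ℂ] ℂ := φbar.comp (e.symm : _ →ₗ[ℂ] _)
  have hψ₀ : ∀ v : V, ψ₀ ⟨S v, LinearMap.mem_range_self S v⟩ = φ v := by
    intro v
    have he : e (Submodule.Quotient.mk v) = ⟨S v, LinearMap.mem_range_self S v⟩ := by
      apply Subtype.ext; rfl
    have : e.symm ⟨S v, LinearMap.mem_range_self S v⟩ = Submodule.Quotient.mk v := by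
      rw [← he, LinearEquiv.symm_apply_apply]
    simp only [ψ₀, LinearMap.coe_comp, LinearEquiv.coe_coe, Function.comp_apply, this]
    exact Submodule.liftQ_apply _ _ _
  have hψbound : ∀ w : LinearMap.range S, ‖ψ₀ w‖ ≤ 1 * ‖(w : H)‖ := by
    rintro ⟨w, hw⟩
    obtain ⟨v, rfl⟩ := hw
    rw [hψ₀ v, one_mul]
    exact hkey v
  let ψ : (LinearMap.range S) →L[ℂ] ℂ := ψ₀.mkContinuous 1 hψbound
  obtain ⟨g, hg, hgnorm⟩ := exists_extension_norm_eq (LinearMap.range S) ψ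
  have hψnorm : ‖ψ‖ ≤ 1 :=
    LinearMap.mkContinuous_norm_le _ zero_le_one _
  refine ⟨(InnerProductSpace.toDual ℂ H).symm g, ?_, ?_⟩
  · rw [LinearIsometryEquiv.norm_map]
    rw [hgnorm]
    exact hψnorm
  · intro v
    have h1 : (inner ℂ ((InnerProductSpace.toDual ℂ H).symm g) (S v) : ℂ) = g (S v) :=
      InnerProductSpace.toDual_symm_apply
    rw [← hSv v, h1]
    have h2 := hg ⟨S v, LinearMap.mem_range_self S v⟩
    rw [h2]
    exact (hψ₀ v).symm
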